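/- Let E = Σ_{(n,3)=1, n>0} x^{n²} and D = Σ_{(n,6)=1, n>0} x^{n²} in Z/2[[x]]. Then E⁴ + E = D. -/

import Mathlib

open PowerSeries Classical Finset

lemma coeff_sq (f : PowerSeries (ZMod 2)) (n : ℕ) :
    PowerSeries.coeff n (f ^ 2) =
      if 2 ∣ n then PowerSeries.coeff (n / 2) f else 0 := by
  rw [pow_two, PowerSeries.coeff_mul]
  by_cases h : 2 ∣ n
  · obtain ⟨k, rfl⟩ := h
    simp only [if_pos (dvd_mul_right 2 k)]
    have hkk : ((k, k) : ℕ × ℕ) ∈ Finset.HasAntidiagonal.antidiagonal (2 * k) := by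
      simp [Finset.HasAntidiagonal.mem_antidiagonal, two_mul]
    rw [← Finset.add_sum_erase _ _ hkk]
    have hz : ∑ p ∈ (Finset.HasAntidiagonal.antidiagonal (2 * k)).erase (k, k),
        PowerSeries.coeff p.1 f * PowerSeries.coeff p.2 f = 0 := by
      apply Finset.sum_involution (fun p _ => p.swap)
      · intro a _
        simp [mul_comm, CharTwo.add_self_eq_zero]
      · intro a ha _
        rw [Finset.mem_erase, Finset.HasAntidiagonal.mem_antidiagonal] at ha
        intro hsw
        have h1 : a.1 = a.2 := by
          have := congrArg Prod.fst hsw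
          simpa using this.symm
        apply ha.1
        have : a.1 = k := by omega
        have : a.2 = k := by omega
        exact Prod.ext ‹a.1 = k› this
      · intro a _; simp
      · intro a ha
        rw [Finset.mem_erase, Finset.HasAntidiagonal.mem_antidiagonal] at ha
        rw [Finset.mem_erase, Finset.HasAntidiagonal.mem_antidiagonal]
        refine ⟨fun hsw => ha.1 (by simpa using congrArg Prod.swap hsw), ?_⟩
        simp only [Prod.fst_swap, Prod.snd_swap]
        omega
    rw [hz, add_zero]
    have hdiv : 2 * k / 2 = k := by omega
    rw [hdiv]
    have : ∀ a : ZMod 2, a * a = a := by decide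
    exact this _
  · rw [if_neg h]
    apply Finset.sum_involution (fun p _ => p.swap)
    · intro a _
      simp [mul_comm, CharTwo.add_self_eq_zero]
    · intro a ha _
      rw [Finset.HasAntidiagonal.mem_antidiagonal] at ha
      intro hsw
      have h1 : a.1 = a.2 := by
        have := congrArg Prod.fst hsw
        simpa using this.symm
      exact h ⟨a.1, by omega⟩
    · intro a _; simp
    · intro a ha
      rw [Finset.HasAntidiagonal.mem_antidiagonal] at ha ⊢
      simp only [Prod.fst_swap, Prod.snd_swap]
      omega

/-- `E = Σ_{(n,3)=1, n > 0} x^{n²}` in `Z/2[[x]]`. -/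
noncomputable def Eser : PowerSeries (ZMod 2) :=
  PowerSeries.mk fun n => if ∃ k : ℕ, Nat.Coprime k 3 ∧ 0 < k ∧ n = k ^ 2 then 1 else 0

/-- `D = Σ_{(n,6)=1, n > 0} x^{n²}` in `Z/2[[x]]`. -/
noncomputable def Dser : PowerSeries (ZMod 2) :=
  PowerSeries.mk fun n => if ∃ k : ℕ, Nat.Coprime k 6 ∧ 0 < k ∧ n = k ^ 2 then 1 else 0

lemma coeff_pow4 (f : PowerSeries (ZMod 2)) (m : ℕ) :
    PowerSeries.coeff m (f ^ 4) =
      if 4 ∣ m then PowerSeries.coeff (m / 4) f else 0 := by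
  rw [show f ^ 4 = (f ^ 2) ^ 2 by ring, coeff_sq]
  by_cases h2 : 2 ∣ m
  · rw [if_pos h2, coeff_sq]
    by_cases h2' : 2 ∣ m / 2
    · rw [if_pos h2', if_pos (by omega), show m / 2 / 2 = m / 4 by omega]
    · rw [if_neg h2', if_neg (by omega)]
  · rw [if_neg h2, if_neg (by omega)]

theorem stmt2 : Eser ^ 4 + Eser = Dser := by
  ext n
  rw [map_add, coeff_pow4]
  simp only [Eser, Dser, PowerSeries.coeff_mk]
  by_cases hP : ∃ k : ℕ, Nat.Coprime k 3 ∧ 0 < k ∧ n = k ^ 2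
  · obtain ⟨k, hk3, hk0, rfl⟩ := hP
    have hE : (if ∃ j : ℕ, Nat.Coprime j 3 ∧ 0 < j ∧ k ^ 2 = j ^ 2 then (1 : ZMod 2) else 0)
        = 1 := if_pos ⟨k, hk3, hk0, rfl⟩
    rw [hE]
    by_cases hk2 : 2 ∣ k
    · obtain ⟨m, rfl⟩ := hk2
      have h4 : 4 ∣ (2 * m) ^ 2 := ⟨m ^ 2, by ring⟩
      have hdiv : (2 * m) ^ 2 / 4 = m ^ 2 := by
        rw [show (2 * m) ^ 2 = 4 * m ^ 2 by ring]; omega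
      have hm3 : Nat.Coprime m 3 := Nat.Coprime.coprime_dvd_left (dvd_mul_left m 2) hk3
      have hm0 : 0 < m := by omega
      have hD : (if ∃ j : ℕ, Nat.Coprime j 6 ∧ 0 < j ∧ (2 * m) ^ 2 = j ^ 2
          then (1 : ZMod 2) else 0) = 0 := by
        apply if_neg
        rintro ⟨j, hj6, hj0, hj⟩
        have hje : j = 2 * m := Nat.pow_left_injective (by norm_num) hj.symm
        have h2 : Nat.Coprime j 2 := Nat.Coprime.coprime_dvd_right (by norm_num) hj6
        subst hje
        have := Nat.Coprime.eq_one_of_dvd h2.symm ⟨m, rfl⟩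
        omega
      rw [if_pos h4, hdiv, if_pos ⟨m, hm3, hm0, rfl⟩, hD]
      decide
    · have hodd : ¬ 2 ∣ k ^ 2 := fun h => hk2 (Nat.Prime.dvd_of_dvd_pow Nat.prime_two h)
      have h4 : ¬ 4 ∣ k ^ 2 := fun h => hodd (dvd_trans (by norm_num) h)
      have hk6 : Nat.Coprime k 6 := by
        have hc2 : Nat.Coprime k 2 :=
          Nat.Coprime.symm ((Nat.prime_two.coprime_iff_not_dvd).mpr hk2)
        exact Nat.Coprime.mul_right hc2 hk3
      have hD : (if ∃ j : ℕ, Nat.Coprime j 6 ∧ 0 < j ∧ k ^ 2 = j ^ 2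
          then (1 : ZMod 2) else 0) = 1 := if_pos ⟨k, hk6, hk0, rfl⟩
      rw [if_neg h4, hD]
      decide
  · have hD : ¬∃ k : ℕ, Nat.Coprime k 6 ∧ 0 < k ∧ n = k ^ 2 := by
      rintro ⟨k, hk6, hk0, rfl⟩
      exact hP ⟨k, Nat.Coprime.coprime_dvd_right (by norm_num) hk6, hk0, rfl⟩
    rw [if_neg hP, if_neg hD, add_zero]
    split_ifs with h1 h2
    · exfalso
      obtain ⟨m, hm3, hm0, hm⟩ := h2
      refine hP ⟨2 * m, Nat.Coprime.mul (by decide) hm3, by omega, ?_⟩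
      have : n = 4 * m ^ 2 := by omega
      rw [this]; ring
    · rfl
    · rfl
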